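/- Let f : I → ℝ be a twice continuously differentiable function on an open interval I with f' nowhere zero, f'' nowhere zero, and such that f'/f'' is convex and negative on I. Then the two-variable equal-weight quasi-arithmetic mean (x,y) ↦ f⁻¹((f(x)+f(y))/2) is Jensen concave on I², i.e., midpoint concave as a function of (x,y). -/

import Mathlib

set_option maxHeartbeats 1000000


open Set

lemma slope_le_slope_of_convexOn {s : Set ℝ} {h : ℝ → ℝ} (hc : ConvexOn ℝ s h)
    {x1 y1 x2 y2 : ℝ} (hx1 : x1 ∈ s) (hy1 : y1 ∈ s) (hx2 : x2 ∈ s) (hy2 : y2 ∈ s)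
    (h11 : x1 < y1) (h12 : y1 ≤ x2) (h22 : x2 < y2) :
    (h y1 - h x1) / (y1 - x1) ≤ (h y2 - h x2) / (y2 - x2) := by
  have e1 : (h y1 - h x1) / (y1 - x1) = slope h y1 x1 := by
    rw [slope_comm]; simp [slope_def_field]
  have e2 : (h y2 - h x2) / (y2 - x2) = slope h y2 x2 := by
    rw [slope_comm]; simp [slope_def_field]
  rw [e1, e2]
  have m1 := hc.slope_mono hy1
  have m2 := hc.slope_mono hy2
  have hx1y2 : x1 ≤ y2 := by linarith
  have s1 : slope h y1 x1 ≤ slope h y1 y2 :=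
    m1 ⟨hx1, fun hh => absurd (mem_singleton_iff.1 hh) (by intro e; linarith)⟩
       ⟨hy2, fun hh => absurd (mem_singleton_iff.1 hh) (by intro e; linarith)⟩ hx1y2
  have s2 : slope h y2 y1 ≤ slope h y2 x2 :=
    m2 ⟨hy1, fun hh => absurd (mem_singleton_iff.1 hh) (by intro e; linarith)⟩
       ⟨hx2, fun hh => absurd (mem_singleton_iff.1 hh) (by intro e; linarith)⟩ h12
  calc slope h y1 x1 ≤ slope h y1 y2 := s1
    _ = slope h y2 y1 := slope_comm _ _ _
    _ ≤ slope h y2 x2 := s2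

/-- Key discretization lemma: `F = f'·(f'/f'')` is midpoint-convex with respect to
the `f`-coordinate. -/
lemma midpoint_F_ineq
    (a b : ℝ) (f : ℝ → ℝ)
    (hfd : ∀ t ∈ Ioo a b, HasDerivAt f (deriv f t) t)
    (hfd2 : ∀ t ∈ Ioo a b, HasDerivAt (deriv f) (deriv (deriv f) t) t)
    (hf'cont : ContinuousOn (deriv f) (Ioo a b))
    (hf''cont : ContinuousOn (deriv (deriv f)) (Ioo a b))
    (hpos : ∀ t ∈ Ioo a b, 0 < deriv f t)
    (hf''ne : ∀ t ∈ Ioo a b, deriv (deriv f) t ≠ 0)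
    (hconv : ConvexOn ℝ (Ioo a b) (fun t => deriv f t / deriv (deriv f) t))
    {α β w : ℝ} (hα : α ∈ Ioo a b) (hβ : β ∈ Ioo a b) (hw : w ∈ Ioo a b)
    (hαβ : α < β)
    (hfw : f w = (f α + f β) / 2) :
    2 * (deriv f w * (deriv f w / deriv (deriv f) w)) ≤
      deriv f α * (deriv f α / deriv (deriv f) α)
        + deriv f β * (deriv f β / deriv (deriv f) β) := by
  set h : ℝ → ℝ := fun t => deriv f t / deriv (deriv f) t with hh
  set F : ℝ → ℝ := fun t => deriv f t * h t with hF
  show 2 * F w ≤ F α + F β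
  have hsub : Icc α β ⊆ Ioo a b := fun t ht => ⟨lt_of_lt_of_le hα.1 ht.1, lt_of_le_of_lt ht.2 hβ.2⟩
  have contf : ContinuousOn f (Ioo a b) := fun t ht =>
    (hfd t ht).continuousAt.continuousWithinAt
  have smf : StrictMonoOn f (Ioo a b) := by
    apply strictMonoOn_of_deriv_pos (convex_Ioo a b) contf
    rwa [interior_Ioo]
  -- compactness bounds
  have hKne : (Icc α β).Nonempty := ⟨α, left_mem_Icc.2 hαβ.le⟩
  obtain ⟨t₁, ht₁, hmin⟩ := isCompact_Icc.exists_isMinOn hKne (hf'cont.mono hsub)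
  set m₁ := deriv f t₁ with hm₁
  have hm₁pos : 0 < m₁ := hpos t₁ (hsub ht₁)
  have hm₁le : ∀ t ∈ Icc α β, m₁ ≤ deriv f t := fun t ht => hmin ht
  obtain ⟨t₂, ht₂, hmax⟩ := isCompact_Icc.exists_isMaxOn hKne ((hf''cont.mono hsub).abs)
  set M₂ := |deriv (deriv f) t₂| with hM₂def
  have hM₂nonneg : 0 ≤ M₂ := abs_nonneg _
  have hM₂le : ∀ t ∈ Icc α β, |deriv (deriv f) t| ≤ M₂ := fun t ht => hmax ht
  -- Lipschitz bound for f' on Icc α β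
  have hlip : ∀ s ∈ Icc α β, ∀ t ∈ Icc α β, |deriv f t - deriv f s| ≤ M₂ * |t - s| := by
    intro s hs t ht
    have := (convex_Icc α β).norm_image_sub_le_of_norm_hasDerivWithin_le
      (f' := fun t => deriv (deriv f) t)
      (fun x hx => (hfd2 x (hsub hx)).hasDerivWithinAt) (fun x hx => hM₂le x hx) hs ht
    simpa [Real.norm_eq_abs] using this
  -- slope bounds for h on Icc α β
  obtain ⟨α₀, hα₀1, hα₀2⟩ := exists_between hα.1
  obtain ⟨β₀, hβ₀1, hβ₀2⟩ := exists_between hβ.2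
  have hα₀I : α₀ ∈ Ioo a b := ⟨hα₀1, lt_trans hα₀2 (lt_trans hαβ hβ.2)⟩
  have hβ₀I : β₀ ∈ Ioo a b := ⟨lt_trans (lt_trans hα.1 hαβ) hβ₀1, hβ₀2⟩
  set sl₁ := (h α - h α₀) / (α - α₀) with hsl₁
  set sl₂ := (h β₀ - h β) / (β₀ - β) with hsl₂
  set Ch := max |sl₁| |sl₂| with hCh
  have hChnonneg : 0 ≤ Ch := le_trans (abs_nonneg _) (le_max_left _ _)
  have hslope : ∀ μ ν, μ ∈ Icc α β → ν ∈ Icc α β → μ < ν →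
      |(h ν - h μ) / (ν - μ)| ≤ Ch := by
    intro μ ν hμ hν hμν
    have hμI := hsub hμ; have hνI := hsub hν
    have lo : sl₁ ≤ (h ν - h μ) / (ν - μ) :=
      slope_le_slope_of_convexOn hconv hα₀I hα hμI hνI hα₀2 hμ.1 hμν
    have hi : (h ν - h μ) / (ν - μ) ≤ sl₂ :=
      slope_le_slope_of_convexOn hconv hμI hνI hβ hβ₀I hμν hν.2 hβ₀1
    rw [abs_le]
    constructor
    · calc -Ch ≤ -|sl₁| := by simp [hCh]
        _ ≤ sl₁ := neg_abs_le _
        _ ≤ _ := lo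
    · calc (h ν - h μ) / (ν - μ) ≤ sl₂ := hi
        _ ≤ |sl₂| := le_abs_self _
        _ ≤ Ch := le_max_right _ _
  set C₀ := (2 * Ch * M₂ + M₂) / m₁ ^ 2 with hC₀
  have hC₀nonneg : 0 ≤ C₀ := by positivity
  -- the per-interval estimate
  have interval_est : ∀ μ ν, μ ∈ Icc α β → ν ∈ Icc α β → μ < ν →
      |F ν - F μ - (f ν - f μ) * (1 + (h ν - h μ) / (ν - μ))| ≤ C₀ * (f ν - f μ) ^ 2 := by
    intro μ ν hμ hν hμν
    have hμI : μ ∈ Ioo a b := hsub hμ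
    have hνI : ν ∈ Ioo a b := hsub hν
    have hIccsub : Icc μ ν ⊆ Icc α β := Icc_subset_Icc hμ.1 hν.2
    have hIoosub : Ioo μ ν ⊆ Icc α β := fun t ht => hIccsub (Ioo_subset_Icc_self ht)
    have hdpos : (0:ℝ) < ν - μ := sub_pos.2 hμν
    obtain ⟨ξ, hξ, hξeq⟩ := exists_hasDerivAt_eq_slope f (deriv f) hμν
        (contf.mono (fun t ht => hsub (hIccsub ht)))
        (fun t ht => hfd t (hsub (hIoosub ht)))
    obtain ⟨ζ, hζ, hζeq⟩ := exists_hasDerivAt_eq_slope (deriv f) (deriv (deriv f)) hμν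
        (hf'cont.mono (fun t ht => hsub (hIccsub ht)))
        (fun t ht => hfd2 t (hsub (hIoosub ht)))
    have hξK : ξ ∈ Icc α β := hIoosub hξ
    have hζK : ζ ∈ Icc α β := hIoosub hζ
    set d := ν - μ with hd
    set ε := f ν - f μ with hεdef
    have h1 : ε = deriv f ξ * d := by
      rw [hεdef, hd] at hξeq ⊢
      field_simp at hξeq
      rw [hξeq, div_mul_cancel₀ _ (sub_pos.2 hμν).ne']
    have h2 : deriv f ν - deriv f μ = deriv (deriv f) ζ * d := by
      rw [hd] at hζeq ⊢
      field_simp at hζeq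
      rw [hζeq, div_mul_cancel₀ _ (sub_pos.2 hμν).ne']
    have h3 : deriv f ζ = h ζ * deriv (deriv f) ζ := by
      have hne := hf''ne ζ (hsub hζK)
      rw [hh]
      field_simp
    set sh := (h ν - h μ) / d with hsh
    have h4 : h ν - h μ = sh * d := by
      rw [hsh]; field_simp
    have identity : F ν - F μ - ε * (1 + sh)
        = sh * d * (deriv f ν - deriv f ξ) + d * (deriv f ζ - deriv f ξ)
          + (h μ - h ζ) * deriv (deriv f) ζ * d := by
      simp only [hF]
      linear_combination (-1 - sh) * h1 + h μ * h2 + (-d) * h3 + (deriv f ν) * h4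
    -- bounds
    have bsh : |sh| ≤ Ch := hslope μ ν hμ hν hμν
    have b1 : |deriv f ν - deriv f ξ| ≤ M₂ * d := by
      calc |deriv f ν - deriv f ξ| ≤ M₂ * |ν - ξ| := hlip ξ hξK ν hν
        _ ≤ M₂ * d := by
            apply mul_le_mul_of_nonneg_left _ hM₂nonneg
            rw [abs_of_nonneg (by linarith [hξ.2] : (0:ℝ) ≤ ν - ξ)]
            linarith [hξ.1]
    have b2 : |deriv f ζ - deriv f ξ| ≤ M₂ * d := by
      calc |deriv f ζ - deriv f ξ| ≤ M₂ * |ζ - ξ| := hlip ξ hξK ζ hζK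
        _ ≤ M₂ * d := by
            apply mul_le_mul_of_nonneg_left _ hM₂nonneg
            rw [abs_le, hd]
            obtain ⟨hξ1, hξ2⟩ := hξ
            obtain ⟨hζ1, hζ2⟩ := hζ
            constructor <;> linarith
    have b3 : |h μ - h ζ| ≤ Ch * d := by
      obtain ⟨hζ1, hζ2⟩ := hζ
      have := hslope μ ζ hμ hζK hζ1
      rw [abs_div, abs_of_pos (by linarith : (0:ℝ) < ζ - μ), div_le_iff₀ (by linarith : (0:ℝ) < ζ - μ)] at this
      calc |h μ - h ζ| = |h ζ - h μ| := by rw [abs_sub_comm]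
        _ ≤ Ch * (ζ - μ) := this
        _ ≤ Ch * d := by
            apply mul_le_mul_of_nonneg_left _ hChnonneg
            rw [hd]; linarith
    have bf'' : |deriv (deriv f) ζ| ≤ M₂ := hM₂le ζ hζK
    have habs : |F ν - F μ - ε * (1 + sh)| ≤ (2 * Ch * M₂ + M₂) * d ^ 2 := by
      rw [identity]
      calc |sh * d * (deriv f ν - deriv f ξ) + d * (deriv f ζ - deriv f ξ)
            + (h μ - h ζ) * deriv (deriv f) ζ * d|
          ≤ |sh * d * (deriv f ν - deriv f ξ) + d * (deriv f ζ - deriv f ξ)|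
            + |(h μ - h ζ) * deriv (deriv f) ζ * d| := abs_add_le _ _
        _ ≤ |sh * d * (deriv f ν - deriv f ξ)| + |d * (deriv f ζ - deriv f ξ)|
            + |(h μ - h ζ) * deriv (deriv f) ζ * d| := by
              linarith [abs_add_le (sh * d * (deriv f ν - deriv f ξ)) (d * (deriv f ζ - deriv f ξ))]
        _ ≤ (2 * Ch * M₂ + M₂) * d ^ 2 := by
            rw [abs_mul, abs_mul, abs_mul, abs_mul, abs_of_pos hdpos]
            have e1 : |sh| * d * |deriv f ν - deriv f ξ| ≤ Ch * d * (M₂ * d) :=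
              mul_le_mul (mul_le_mul_of_nonneg_right bsh hdpos.le) b1
                (abs_nonneg _) (by positivity)
            have e2 : d * |deriv f ζ - deriv f ξ| ≤ d * (M₂ * d) :=
              mul_le_mul_of_nonneg_left b2 hdpos.le
            have e3 : |(h μ - h ζ) * deriv (deriv f) ζ| * d ≤ Ch * d * M₂ * d := by
              rw [abs_mul]
              apply mul_le_mul_of_nonneg_right _ hdpos.le
              calc |h μ - h ζ| * |deriv (deriv f) ζ| ≤ (Ch * d) * M₂ :=
                    mul_le_mul b3 bf'' (abs_nonneg _) (by positivity)
                _ = Ch * d * M₂ := by ring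
            nlinarith [e1, e2, e3]
    -- compare d with ε
    have hεd : m₁ * d ≤ ε := by
      rw [h1]
      exact mul_le_mul_of_nonneg_right (hm₁le ξ hξK) hdpos.le
    have hεpos : 0 < ε := lt_of_lt_of_le (by positivity) hεd
    have hd2 : d ^ 2 ≤ ε ^ 2 / m₁ ^ 2 := by
      rw [le_div_iff₀ (by positivity : (0:ℝ) < m₁ ^ 2)]
      have hsq : (m₁ * d) ^ 2 ≤ ε ^ 2 := by
        apply pow_le_pow_left₀ (by positivity) hεd
      calc d ^ 2 * m₁ ^ 2 = (m₁ * d) ^ 2 := by ring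
        _ ≤ ε ^ 2 := hsq
    calc |F ν - F μ - ε * (1 + sh)| ≤ (2 * Ch * M₂ + M₂) * d ^ 2 := habs
      _ ≤ (2 * Ch * M₂ + M₂) * (ε ^ 2 / m₁ ^ 2) := by
          apply mul_le_mul_of_nonneg_left hd2 (by positivity)
      _ = C₀ * ε ^ 2 := by rw [hC₀]; ring
  -- pairwise comparison of increments
  have pair : ∀ μL νL μR νR, μL ∈ Icc α β → νL ∈ Icc α β → μR ∈ Icc α β → νR ∈ Icc α β →
      μL < νL → νL ≤ μR → μR < νR → f νR - f μR = f νL - f μL →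
      F νL - F μL ≤ F νR - F μR + 2 * C₀ * (f νL - f μL) ^ 2 := by
    intro μL νL μR νR hμL hνL hμR hνR hLlt hLE hRlt heq
    have hεpos : 0 < f νL - f μL := by
      have := smf (hsub hμL) (hsub hνL) hLlt; linarith
    have hsL := interval_est μL νL hμL hνL hLlt
    have hsR := interval_est μR νR hμR hνR hRlt
    have hslope_cmp : (h νL - h μL) / (νL - μL) ≤ (h νR - h μR) / (νR - μR) :=
      slope_le_slope_of_convexOn hconv (hsub hμL) (hsub hνL) (hsub hμR) (hsub hνR) hLlt hLE hRlt
    rw [abs_le] at hsL hsR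
    have h1 : F νL - F μL ≤ (f νL - f μL) * (1 + (h νL - h μL)/(νL - μL))
        + C₀ * (f νL - f μL)^2 := by linarith [hsL.2]
    have h2 : (f νR - f μR) * (1 + (h νR - h μR)/(νR - μR)) - C₀ * (f νR - f μR)^2
        ≤ F νR - F μR := by linarith [hsR.1]
    have h3 : (f νL - f μL) * (1 + (h νL - h μL)/(νL - μL))
        ≤ (f νL - f μL) * (1 + (h νR - h μR)/(νR - μR)) :=
      mul_le_mul_of_nonneg_left (by linarith) hεpos.le
    rw [heq] at h2
    linarith
  -- main estimate for each n
  have main : ∀ n : ℕ, 0 < n →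
      -((2 * C₀ * ((f β - f α)/2) ^ 2) / n) ≤ F α + F β - 2 * F w := by
    intro n hn
    set δ := (f β - f α) / 2 with hδdef
    have hfαβ : f α < f β := smf hα hβ hαβ
    have hδpos : 0 < δ := by rw [hδdef]; linarith
    have hnR : (0:ℝ) < n := Nat.cast_pos.2 hn
    set ε := δ / n with hεdef2
    have hεpos : 0 < ε := by positivity
    have hex : ∀ i : ℕ, ∃ t, i ≤ 2 * n → (t ∈ Icc α β ∧ f t = f α + i * ε) := by
      intro i
      by_cases hi : i ≤ 2 * n
      · have hiR : (i:ℝ) ≤ 2 * n := by exact_mod_cast hi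
        have h2δ : (2 * (n:ℝ)) * ε = 2 * δ := by
          rw [hεdef2]; field_simp
        have hmem : f α + i * ε ∈ Icc (f α) (f β) := by
          constructor
          · nlinarith [hεpos, (Nat.cast_nonneg i : (0:ℝ) ≤ i)]
          · nlinarith [hεpos]
        obtain ⟨t, htK, htf⟩ := intermediate_value_Icc hαβ.le (contf.mono hsub) hmem
        exact ⟨t, fun _ => ⟨htK, htf⟩⟩
      · exact ⟨α, fun hc => absurd hc hi⟩
    choose τ hτ using hex
    have hτK : ∀ i, i ≤ 2*n → τ i ∈ Icc α β := fun i hi => (hτ i hi).1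
    have hτf : ∀ i, i ≤ 2*n → f (τ i) = f α + i * ε := fun i hi => (hτ i hi).2
    have hτmono : ∀ i j, i < j → j ≤ 2*n → τ i < τ j := by
      intro i j hij hj
      have hfi : f (τ i) < f (τ j) := by
        rw [hτf i (le_trans hij.le hj), hτf j hj]
        have hijR : (i:ℝ) < j := by exact_mod_cast hij
        nlinarith [hεpos]
      exact (smf.lt_iff_lt (hsub (hτK i (le_trans hij.le hj))) (hsub (hτK j hj))).1 hfi
    have hinj := smf.injOn
    have hτ0 : τ 0 = α := by
      apply hinj (hsub (hτK 0 (by omega))) hα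
      rw [hτf 0 (by omega)]; simp
    have hτn : τ n = w := by
      apply hinj (hsub (hτK n (by omega))) hw
      rw [hτf n (by omega), hfw, hεdef2, hδdef]
      field_simp
      try ring
    have hτ2n : τ (2*n) = β := by
      apply hinj (hsub (hτK (2*n) le_rfl)) hβ
      rw [hτf (2*n) le_rfl, hεdef2, hδdef]
      push_cast
      field_simp
      try ring
    have T2 : ∑ j ∈ Finset.range n, (F (τ (j+1)) - F (τ j)) = F w - F α := by
      rw [Finset.sum_range_sub (fun j => F (τ j)) n, hτn, hτ0]
    have T1 : ∑ j ∈ Finset.range n, (F (τ (n+j+1)) - F (τ (n+j))) = F β - F w := by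
      have key := Finset.sum_range_sub (fun j => F (τ (n+j))) n
      calc ∑ j ∈ Finset.range n, (F (τ (n+j+1)) - F (τ (n+j)))
          = ∑ j ∈ Finset.range n, (F (τ (n+(j+1))) - F (τ (n+j))) := by
            apply Finset.sum_congr rfl; intro j _; rw [← Nat.add_assoc]
        _ = F (τ (n+n)) - F (τ (n+0)) := key
        _ = F β - F w := by rw [Nat.add_zero, (by omega : n+n = 2*n), hτ2n, hτn]
    have step : ∀ j ∈ Finset.range n,
        F (τ (j+1)) - F (τ j) ≤ (F (τ (n+j+1)) - F (τ (n+j))) + 2*C₀*ε^2 := by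
      intro j hj
      rw [Finset.mem_range] at hj
      have hj1 : j + 1 ≤ 2*n := by omega
      have hnj : n + j ≤ 2*n := by omega
      have hnj1 : n + j + 1 ≤ 2*n := by omega
      have incL : f (τ (j+1)) - f (τ j) = ε := by
        rw [hτf (j+1) hj1, hτf j (by omega)]; push_cast; ring
      have incR : f (τ (n+j+1)) - f (τ (n+j)) = ε := by
        rw [hτf (n+j+1) hnj1, hτf (n+j) hnj]; push_cast; ring
      have hcmp := pair (τ j) (τ (j+1)) (τ (n+j)) (τ (n+j+1))
        (hτK j (by omega)) (hτK (j+1) hj1) (hτK (n+j) hnj) (hτK (n+j+1) hnj1)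
        (hτmono j (j+1) (by omega) hj1)
        (by
          rcases Nat.lt_or_ge (j+1) (n+j) with hlt | hge
          · exact (hτmono (j+1) (n+j) hlt hnj).le
          · have hje : j + 1 = n + j := by omega
            rw [hje])
        (hτmono (n+j) (n+j+1) (by omega) hnj1)
        (by rw [incL, incR])
      rw [incL] at hcmp
      linarith
    have sumle := Finset.sum_le_sum step
    rw [T2] at sumle
    have hsplit : ∑ j ∈ Finset.range n, ((F (τ (n+j+1)) - F (τ (n+j))) + 2*C₀*ε^2)
        = (F β - F w) + n * (2*C₀*ε^2) := by
      rw [Finset.sum_add_distrib, T1, Finset.sum_const, Finset.card_range]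
      simp [nsmul_eq_mul]
    rw [hsplit] at sumle
    have hcard : (n:ℝ) * (2*C₀*ε^2) = (2*C₀*δ^2)/n := by
      rw [hεdef2]; field_simp
    rw [hcard] at sumle
    linarith
  -- conclude by letting n → ∞
  by_contra hcon
  push_neg at hcon
  set r := F α + F β - 2 * F w with hr
  have hrneg : r < 0 := by rw [hr]; linarith
  set c := 2 * C₀ * ((f β - f α)/2) ^ 2 with hc
  have hcnonneg : 0 ≤ c := by positivity
  obtain ⟨n, hn⟩ := exists_nat_gt (c / (-r))
  have hn1 : c / (-r) < ((n+1 : ℕ) : ℝ) := by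
    push_cast
    push_cast at hn
    linarith
  have hnpos' : (0:ℝ) < ((n+1:ℕ):ℝ) := by positivity
  have hclt : c < ((n+1:ℕ):ℝ) * (-r) := by
    rwa [div_lt_iff₀ (by linarith : (0:ℝ) < -r)] at hn1
  have hmain := main (n+1) (Nat.succ_pos n)
  have hlt : r < -(c / ((n+1:ℕ):ℝ)) := by
    rw [lt_neg]
    rw [div_lt_iff₀ hnpos']
    nlinarith [hclt]
  linarith [hmain, hlt]

theorem quasi_main
    (a b : ℝ) (f g : ℝ → ℝ)
    (hf : ContDiffOn ℝ 2 f (Ioo a b))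
    (hpos : ∀ t ∈ Ioo a b, 0 < deriv f t)
    (hf'' : ∀ t ∈ Ioo a b, deriv (deriv f) t ≠ 0)
    (hconv : ConvexOn ℝ (Ioo a b) (fun t => deriv f t / deriv (deriv f) t))
    (hneg : ∀ t ∈ Ioo a b, deriv f t / deriv (deriv f) t < 0)
    (hg : Set.InvOn g f (Ioo a b) (f '' Ioo a b)) :
    ∀ x ∈ Ioo a b, ∀ y ∈ Ioo a b, ∀ u ∈ Ioo a b, ∀ v ∈ Ioo a b,
      (g ((f x + f y) / 2) + g ((f u + f v) / 2)) / 2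
        ≤ g ((f ((x + u) / 2) + f ((y + v) / 2)) / 2) := by
  intro x hx y hy u hu v hv
  have hO : IsOpen (Ioo a b) := isOpen_Ioo
  have hf1 : ContDiffOn ℝ 1 (deriv f) (Ioo a b) :=
    hf.deriv_of_isOpen hO (by norm_num)
  have hfd : ∀ t ∈ Ioo a b, HasDerivAt f (deriv f t) t := fun t ht =>
    ((hf.differentiableOn (by norm_num)).differentiableAt (hO.mem_nhds ht)).hasDerivAt
  have hfd2 : ∀ t ∈ Ioo a b, HasDerivAt (deriv f) (deriv (deriv f) t) t := fun t ht =>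
    ((hf1.differentiableOn (by norm_num)).differentiableAt (hO.mem_nhds ht)).hasDerivAt
  have hf'cont : ContinuousOn (deriv f) (Ioo a b) := hf1.continuousOn
  have hf''cont : ContinuousOn (deriv (deriv f)) (Ioo a b) :=
    hf1.continuousOn_deriv_of_isOpen hO (le_refl 1)
  have hf''neg : ∀ t ∈ Ioo a b, deriv (deriv f) t < 0 := by
    intro t ht
    rcases div_neg_iff.1 (hneg t ht) with ⟨_, hlt⟩ | ⟨hlt, _⟩
    · exact hlt
    · exact absurd hlt (not_lt.2 (hpos t ht).le)
  have contf : ContinuousOn f (Ioo a b) := fun t ht =>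
    (hfd t ht).continuousAt.continuousWithinAt
  have smf : StrictMonoOn f (Ioo a b) := by
    apply strictMonoOn_of_deriv_pos (convex_Ioo a b) contf
    rwa [interior_Ioo]
  set J := f '' Ioo a b with hJ
  have hJord : ∀ s1 ∈ J, ∀ s2 ∈ J, ∀ z, s1 ≤ z → z ≤ s2 → z ∈ J := by
    rintro s1 ⟨t1, ht1, rfl⟩ s2 ⟨t2, ht2, rfl⟩ z hz1 hz2
    have hsub : uIcc t1 t2 ⊆ Ioo a b := by
      rw [uIcc_eq_union]
      exact union_subset (Icc_subset_Ioo ht1.1 ht2.2) (Icc_subset_Ioo ht2.1 ht1.2)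
    have : z ∈ uIcc (f t1) (f t2) := by
      rw [mem_uIcc]; left; exact ⟨hz1, hz2⟩
    obtain ⟨t, htm, htf⟩ := intermediate_value_uIcc (contf.mono hsub) this
    exact ⟨t, hsub htm, htf⟩
  have hJmid : ∀ s1 ∈ J, ∀ s2 ∈ J, (s1 + s2)/2 ∈ J := by
    intro s1 hs1 s2 hs2
    rcases le_total s1 s2 with hle | hle
    · exact hJord s1 hs1 s2 hs2 _ (by linarith) (by linarith)
    · exact hJord s2 hs2 s1 hs1 _ (by linarith) (by linarith)
  have gmem : ∀ s ∈ J, g s ∈ Ioo a b ∧ f (g s) = s := by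
    rintro s ⟨t, ht, rfl⟩
    rw [hg.1 ht]
    exact ⟨ht, rfl⟩
  have gcont : ∀ s ∈ J, ContinuousAt g s := by
    intro s hs
    obtain ⟨hw, hfw⟩ := gmem s hs
    set w := g s with hwdef
    rw [ContinuousAt, ← hwdef]
    rw [tendsto_order]
    constructor
    · intro l hl
      obtain ⟨l₂, hl₂1, hl₂2⟩ := exists_between (max_lt hl hw.1 : max l a < w)
      have hl₂I : l₂ ∈ Ioo a b := ⟨le_max_right l a |>.trans_lt hl₂1, hl₂2.trans hw.2⟩
      obtain ⟨u₂, hu₂1, hu₂2⟩ := exists_between hw.2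
      have hu₂I : u₂ ∈ Ioo a b := ⟨hw.1.trans hu₂1, hu₂2⟩
      have hU : Ioo (f l₂) (f u₂) ∈ nhds s := by
        apply isOpen_Ioo.mem_nhds
        rw [← hfw]
        exact ⟨smf hl₂I hw hl₂2, smf hw hu₂I hu₂1⟩
      filter_upwards [hU] with s' hs'
      have hs'J : s' ∈ J := hJord (f l₂) (mem_image_of_mem f hl₂I) (f u₂)
        (mem_image_of_mem f hu₂I) s' hs'.1.le hs'.2.le
      obtain ⟨hgs', hfgs'⟩ := gmem s' hs'J
      have : l₂ < g s' := by
        by_contra hcon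
        push_neg at hcon
        have := smf.monotoneOn hgs' hl₂I hcon
        rw [hfgs'] at this
        exact absurd hs'.1 (not_lt.2 this)
      exact lt_of_le_of_lt (le_max_left l a) hl₂1 |>.trans this
    · intro r hr
      obtain ⟨u₂, hu₂1, hu₂2⟩ := exists_between (lt_min hr hw.2 : w < min r b)
      have hu₂I : u₂ ∈ Ioo a b := ⟨hw.1.trans hu₂1, hu₂2.trans_le (min_le_right r b)⟩
      obtain ⟨l₂, hl₂1, hl₂2⟩ := exists_between hw.1
      have hl₂I : l₂ ∈ Ioo a b := ⟨hl₂1, hl₂2.trans hw.2⟩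
      have hU : Ioo (f l₂) (f u₂) ∈ nhds s := by
        apply isOpen_Ioo.mem_nhds
        rw [← hfw]
        exact ⟨smf hl₂I hw hl₂2, smf hw hu₂I hu₂1⟩
      filter_upwards [hU] with s' hs'
      have hs'J : s' ∈ J := hJord (f l₂) (mem_image_of_mem f hl₂I) (f u₂)
        (mem_image_of_mem f hu₂I) s' hs'.1.le hs'.2.le
      obtain ⟨hgs', hfgs'⟩ := gmem s' hs'J
      have : g s' < u₂ := by
        by_contra hcon
        push_neg at hcon
        have := smf.monotoneOn hu₂I hgs' hcon
        rw [hfgs'] at this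
        exact absurd hs'.2 (not_lt.2 this)
      exact this.trans (hu₂2.trans_le (min_le_left r b))
  have hJnhds : ∀ s ∈ J, J ∈ nhds s := by
    intro s hs
    obtain ⟨hw, hfw⟩ := gmem s hs
    set w := g s with hwdef
    obtain ⟨l₂, hl₂1, hl₂2⟩ := exists_between hw.1
    obtain ⟨u₂, hu₂1, hu₂2⟩ := exists_between hw.2
    have hl₂I : l₂ ∈ Ioo a b := ⟨hl₂1, hl₂2.trans hw.2⟩
    have hu₂I : u₂ ∈ Ioo a b := ⟨hw.1.trans hu₂1, hu₂2⟩
    apply Filter.mem_of_superset (isOpen_Ioo.mem_nhds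
      (show s ∈ Ioo (f l₂) (f u₂) from by
        rw [← hfw]; exact ⟨smf hl₂I hw hl₂2, smf hw hu₂I hu₂1⟩))
    intro z hz
    exact hJord (f l₂) (mem_image_of_mem f hl₂I) (f u₂)
      (mem_image_of_mem f hu₂I) z hz.1.le hz.2.le
  have gderiv : ∀ s ∈ J, HasDerivAt g (deriv f (g s))⁻¹ s := by
    intro s hs
    obtain ⟨hw, hfw⟩ := gmem s hs
    apply HasDerivAt.of_local_left_inverse (gcont s hs) (hfd _ hw) (ne_of_gt (hpos _ hw))
    filter_upwards [hJnhds s hs] with s' hs'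
    exact (gmem s' hs').2
  
  -- the path
  set p := u - x with hp
  set q := v - y with hq
  set cfun : ℝ → ℝ := fun t => (f (x + t * p) + f (y + t * q)) / 2 with hcfun
  set c1 : ℝ → ℝ := fun t => (p * deriv f (x + t * p) + q * deriv f (y + t * q)) / 2 with hc1def
  set c2 : ℝ → ℝ := fun t =>
    (p ^ 2 * deriv (deriv f) (x + t * p) + q ^ 2 * deriv (deriv f) (y + t * q)) / 2 with hc2def
  set φ : ℝ → ℝ := fun t => g (cfun t) with hφdef
  set φ1 : ℝ → ℝ := fun t => c1 t / deriv f (g (cfun t)) with hφ1def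
  set φ2 : ℝ → ℝ := fun t =>
    (c2 t * deriv f (g (cfun t)) - c1 t * (deriv (deriv f) (g (cfun t)) * φ1 t))
      / (deriv f (g (cfun t))) ^ 2 with hφ2def
  have hαmem : ∀ t ∈ Icc (0:ℝ) 1, x + t * p ∈ Ioo a b := by
    intro t ht
    have h1 : (1 - t) * x + t * u ∈ Ioo a b :=
      convex_Ioo a b hx hu (by linarith [ht.2]) ht.1 (by ring)
    have : x + t * p = (1 - t) * x + t * u := by rw [hp]; ring
    rwa [this]
  have hβmem : ∀ t ∈ Icc (0:ℝ) 1, y + t * q ∈ Ioo a b := by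
    intro t ht
    have h1 : (1 - t) * y + t * v ∈ Ioo a b :=
      convex_Ioo a b hy hv (by linarith [ht.2]) ht.1 (by ring)
    have : y + t * q = (1 - t) * y + t * v := by rw [hq]; ring
    rwa [this]
  have hcJ : ∀ t ∈ Icc (0:ℝ) 1, cfun t ∈ J := by
    intro t ht
    exact hJmid _ (mem_image_of_mem f (hαmem t ht)) _ (mem_image_of_mem f (hβmem t ht))
  have hinner1 : ∀ t : ℝ, HasDerivAt (fun s => x + s * p) p t := by
    intro t
    simpa using ((hasDerivAt_id t).mul_const p).const_add x
  have hinner2 : ∀ t : ℝ, HasDerivAt (fun s => y + s * q) q t := by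
    intro t
    simpa using ((hasDerivAt_id t).mul_const q).const_add y
  have hcderiv : ∀ t ∈ Icc (0:ℝ) 1, HasDerivAt cfun (c1 t) t := by
    intro t ht
    have h1 : HasDerivAt (fun s => f (x + s * p)) (deriv f (x + t * p) * p) t :=
      (hfd _ (hαmem t ht)).comp t (hinner1 t)
    have h2 : HasDerivAt (fun s => f (y + s * q)) (deriv f (y + t * q) * q) t :=
      (hfd _ (hβmem t ht)).comp t (hinner2 t)
    have := (h1.add h2).div_const 2
    exact this.congr_deriv (by simp only [hc1def]; ring)
  have hφderiv : ∀ t ∈ Icc (0:ℝ) 1, HasDerivAt φ (φ1 t) t := by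
    intro t ht
    have := (gderiv (cfun t) (hcJ t ht)).comp t (hcderiv t ht)
    exact this.congr_deriv (by simp only [hφ1def]; rw [div_eq_inv_mul])
  have hc1deriv : ∀ t ∈ Icc (0:ℝ) 1, HasDerivAt c1 (c2 t) t := by
    intro t ht
    have h1 : HasDerivAt (fun s => deriv f (x + s * p)) (deriv (deriv f) (x + t * p) * p) t :=
      by have := (hfd2 _ (hαmem t ht)).comp t (hinner1 t); exact this
    have h2 : HasDerivAt (fun s => deriv f (y + s * q)) (deriv (deriv f) (y + t * q) * q) t :=
      by have := (hfd2 _ (hβmem t ht)).comp t (hinner2 t); exact this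
    have := ((h1.const_mul p).add (h2.const_mul q)).div_const 2
    exact this.congr_deriv (by simp only [hc2def]; ring)
  have hφ1deriv : ∀ t ∈ Icc (0:ℝ) 1, HasDerivAt φ1 (φ2 t) t := by
    intro t ht
    have hdenom : HasDerivAt (fun s => deriv f (g (cfun s)))
        (deriv (deriv f) (g (cfun t)) * φ1 t) t :=
      by have := (hfd2 _ (gmem (cfun t) (hcJ t ht)).1).comp t (hφderiv t ht); exact this
    have hne : deriv f (g (cfun t)) ≠ 0 := ne_of_gt (hpos _ (gmem (cfun t) (hcJ t ht)).1)
    exact (hc1deriv t ht).div hdenom hne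
  have hφ2nonpos : ∀ t ∈ Icc (0:ℝ) 1, φ2 t ≤ 0 := by
    intro t ht
    have hαI : x + t * p ∈ Ioo a b := hαmem t ht
    have hβI : y + t * q ∈ Ioo a b := hβmem t ht
    obtain ⟨hwI, hfw⟩ := gmem (cfun t) (hcJ t ht)
    set α' := x + t * p with hα'
    set β' := y + t * q with hβ'
    set w := g (cfun t) with hwdef
    have hfweq : f w = (f α' + f β') / 2 := by rw [hfw, hcfun]
    have h1a : 0 < deriv f α' := hpos _ hαI
    have h1b : 0 < deriv f β' := hpos _ hβI
    have h1w : 0 < deriv f w := hpos _ hwI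
    have h2a : deriv (deriv f) α' ≠ 0 := hf'' _ hαI
    have h2b : deriv (deriv f) β' ≠ 0 := hf'' _ hβI
    have h2w : deriv (deriv f) w ≠ 0 := hf'' _ hwI
    have hL : 2 * (deriv f w * (deriv f w / deriv (deriv f) w)) ≤
        deriv f α' * (deriv f α' / deriv (deriv f) α')
          + deriv f β' * (deriv f β' / deriv (deriv f) β') := by
      rcases lt_trichotomy α' β' with hlt | heq | hgt
      · exact midpoint_F_ineq a b f hfd hfd2 hf'cont hf''cont hpos hf'' hconv
          hαI hβI hwI hlt hfweq
      · have hwα : w = α' := by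
          apply smf.injOn hwI hαI
          rw [hfweq, heq]; ring
        rw [hwα, heq]
        linarith
      · have := midpoint_F_ineq a b f hfd hfd2 hf'cont hf''cont hpos hf'' hconv
          hβI hαI hwI hgt (by rw [hfweq]; ring)
        linarith
    obtain ⟨A, hA⟩ : ∃ A : ℝ, A = p * deriv f α' := ⟨_, rfl⟩
    obtain ⟨B, hB⟩ : ∃ B : ℝ, B = q * deriv f β' := ⟨_, rfl⟩
    obtain ⟨Xa, hXa⟩ : ∃ X : ℝ, X = -(deriv f α' * (deriv f α' / deriv (deriv f) α')) := ⟨_, rfl⟩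
    obtain ⟨Xb, hXb⟩ : ∃ X : ℝ, X = -(deriv f β' * (deriv f β' / deriv (deriv f) β')) := ⟨_, rfl⟩
    obtain ⟨Xw, hXw⟩ : ∃ X : ℝ, X = -(deriv f w * (deriv f w / deriv (deriv f) w)) := ⟨_, rfl⟩
    have hXapos : 0 < Xa := by
      rw [hXa]
      have := mul_neg_of_pos_of_neg h1a (hneg _ hαI)
      linarith
    have hXbpos : 0 < Xb := by
      rw [hXb]
      have := mul_neg_of_pos_of_neg h1b (hneg _ hβI)
      linarith
    have hXwpos : 0 < Xw := by
      rw [hXw]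
      have := mul_neg_of_pos_of_neg h1w (hneg _ hwI)
      linarith
    have ta : p ^ 2 * deriv (deriv f) α' * Xa = -(A ^ 2) := by
      rw [hXa, hA]; field_simp
    have tb : q ^ 2 * deriv (deriv f) β' * Xb = -(B ^ 2) := by
      rw [hXb, hB]; field_simp
    have tw : deriv (deriv f) w * Xw = -((deriv f w) ^ 2) := by
      rw [hXw]; field_simp
    have hLX : Xa + Xb ≤ 2 * Xw := by
      rw [hXa, hXb, hXw]; linarith [hL]
    have engel : (A + B) ^ 2 * Xa * Xb ≤ (A ^ 2 * Xb + B ^ 2 * Xa) * (Xa + Xb) := by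
      nlinarith [sq_nonneg (A * Xb - B * Xa)]
    have m1 : (A ^ 2 * Xb + B ^ 2 * Xa) * (Xa + Xb) ≤ (A ^ 2 * Xb + B ^ 2 * Xa) * (2 * Xw) :=
      mul_le_mul_of_nonneg_left hLX (by positivity)
    have bracket : (A + B) ^ 2 * Xa * Xb / 4 - A ^ 2 * Xb * Xw / 2 - B ^ 2 * Xa * Xw / 2 ≤ 0 := by
      have m1' : (A ^ 2 * Xb + B ^ 2 * Xa) * (2 * Xw) = 2 * (A ^ 2 * Xb * Xw) + 2 * (B ^ 2 * Xa * Xw) := by ring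
      have g1' : (A + B) ^ 2 * Xa * Xb / 4 - A ^ 2 * Xb * Xw / 2 - B ^ 2 * Xa * Xw / 2
          = ((A + B) ^ 2 * Xa * Xb - 2 * (A ^ 2 * Xb * Xw) - 2 * (B ^ 2 * Xa * Xw)) / 4 := by ring
      rw [g1']
      linarith [engel, m1, m1']
    have hc1 : c1 t = (A + B) / 2 := by
      rw [hc1def, hA, hB]
    have hc2 : c2 t = (p ^ 2 * deriv (deriv f) α' + q ^ 2 * deriv (deriv f) β') / 2 := by
      rw [hc2def]
    have expand : (c2 t * (deriv f w) ^ 2 - (c1 t) ^ 2 * deriv (deriv f) w) * (Xa * Xb * Xw)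
        = (deriv f w) ^ 2 * ((A + B) ^ 2 * Xa * Xb / 4
            - A ^ 2 * Xb * Xw / 2 - B ^ 2 * Xa * Xw / 2) := by
      rw [hc1, hc2]
      linear_combination ((deriv f w) ^ 2 / 2 * Xb * Xw) * ta
        + ((deriv f w) ^ 2 / 2 * Xa * Xw) * tb
        + (-(A + B) ^ 2 / 4 * Xa * Xb) * tw
    have key2 : c2 t * (deriv f w) ^ 2 - (c1 t) ^ 2 * deriv (deriv f) w ≤ 0 := by
      have hP : 0 < Xa * Xb * Xw := by positivity
      have keyle : (c2 t * (deriv f w) ^ 2 - (c1 t) ^ 2 * deriv (deriv f) w) * (Xa * Xb * Xw)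
          ≤ 0 := by
        rw [expand]
        apply mul_nonpos_of_nonneg_of_nonpos (sq_nonneg _) bracket
      by_contra hcon
      push_neg at hcon
      nlinarith [mul_pos hcon hP]
    have hφ2eq : φ2 t = (c2 t * (deriv f w) ^ 2 - (c1 t) ^ 2 * deriv (deriv f) w)
        / (deriv f w) ^ 3 := by
      simp only [hφ2def, hφ1def]
      rw [← hwdef]
      field_simp
    rw [hφ2eq]
    apply div_nonpos_of_nonpos_of_nonneg key2 (by positivity)
  have hconc : ConcaveOn ℝ (Icc (0:ℝ) 1) φ := by
    apply concaveOn_of_hasDerivWithinAt2_nonpos (convex_Icc 0 1)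
      (f' := φ1) (f'' := φ2)
    · exact fun t ht => (hφderiv t ht).continuousAt.continuousWithinAt
    · intro t ht
      rw [interior_Icc] at ht
      exact (hφderiv t (Ioo_subset_Icc_self ht)).hasDerivWithinAt
    · intro t ht
      rw [interior_Icc] at ht
      exact (hφ1deriv t (Ioo_subset_Icc_self ht)).hasDerivWithinAt
    · intro t ht
      rw [interior_Icc] at ht
      exact hφ2nonpos t (Ioo_subset_Icc_self ht)
  have hfin := hconc.2 (left_mem_Icc.2 (by norm_num)) (right_mem_Icc.2 (by norm_num))
    (by norm_num : (0:ℝ) ≤ 1/2) (by norm_num : (0:ℝ) ≤ 1/2) (by norm_num)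
  simp only [smul_eq_mul, mul_zero, mul_one, zero_add] at hfin
  have e0 : φ 0 = g ((f x + f y) / 2) := by
    rw [hφdef, hcfun]
    norm_num
  have e1 : φ 1 = g ((f u + f v) / 2) := by
    rw [hφdef, hcfun]
    have ex : x + 1 * p = u := by rw [hp]; ring
    have ey : y + 1 * q = v := by rw [hq]; ring
    simp only [ex, ey]
  have e2 : φ (1/2) = g ((f ((x + u) / 2) + f ((y + v) / 2)) / 2) := by
    rw [hφdef, hcfun]
    have ex : x + (1/2) * p = (x + u) / 2 := by rw [hp]; ring
    have ey : y + (1/2) * q = (y + v) / 2 := by rw [hq]; ring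
    simp only [ex, ey]
  rw [e0, e1, e2] at hfin
  linarith

/-- If `f` is twice continuously differentiable on an open interval `I` with
`f'` and `f''` nowhere zero and `f'/f''` convex and negative on `I`, then the
two-variable equal-weight quasi-arithmetic mean `(x,y) ↦ f⁻¹((f x + f y)/2)`
is Jensen (midpoint) concave on `I²`. -/
theorem quasiArithmetic_two_var_jensenConcave
    (a b : ℝ) (hab : a < b) (f g : ℝ → ℝ)
    (hf : ContDiffOn ℝ 2 f (Ioo a b))
    (hf' : ∀ t ∈ Ioo a b, deriv f t ≠ 0)
    (hf'' : ∀ t ∈ Ioo a b, deriv (deriv f) t ≠ 0)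
    (hconv : ConvexOn ℝ (Ioo a b) (fun t => deriv f t / deriv (deriv f) t))
    (hneg : ∀ t ∈ Ioo a b, deriv f t / deriv (deriv f) t < 0)
    (hg : Set.InvOn g f (Ioo a b) (f '' Ioo a b)) :
    ∀ x ∈ Ioo a b, ∀ y ∈ Ioo a b, ∀ u ∈ Ioo a b, ∀ v ∈ Ioo a b,
      (g ((f x + f y) / 2) + g ((f u + f v) / 2)) / 2
        ≤ g ((f ((x + u) / 2) + f ((y + v) / 2)) / 2) := by
  have hO : IsOpen (Ioo a b) := isOpen_Ioo
  have hf1 : ContDiffOn ℝ 1 (deriv f) (Ioo a b) :=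
    hf.deriv_of_isOpen hO (by norm_num)
  have hf'cont : ContinuousOn (deriv f) (Ioo a b) := hf1.continuousOn
  have ht0 : (a + b) / 2 ∈ Ioo a b := ⟨by linarith, by linarith⟩
  have husub : ∀ t ∈ Ioo a b, uIcc t ((a+b)/2) ⊆ Ioo a b := by
    intro t ht
    rw [uIcc_eq_union]
    exact union_subset (Icc_subset_Ioo ht.1 ht0.2) (Icc_subset_Ioo ht0.1 ht.2)
  rcases (hf' _ ht0).lt_or_gt with hneg0 | hpos0
  · -- f' negative everywhere; apply the main theorem to -f and g ∘ Neg.neg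
    have hsign : ∀ t ∈ Ioo a b, deriv f t < 0 := by
      intro t ht
      rcases (hf' t ht).lt_or_gt with h | h
      · exact h
      · exfalso
        have h0m : (0:ℝ) ∈ uIcc (deriv f t) (deriv f ((a+b)/2)) := by
          rw [mem_uIcc]; right; exact ⟨hneg0.le, h.le⟩
        obtain ⟨ζ, hζm, hζ0⟩ := intermediate_value_uIcc
          (hf'cont.mono (husub t ht)) h0m
        exact hf' ζ (husub t ht hζm) hζ0
    have hd1 : ∀ t : ℝ, deriv (fun s => -f s) t = -deriv f t := fun t => deriv.neg
    have hF1 : deriv (fun s => -f s) = fun t => -deriv f t := funext hd1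
    have hd2 : ∀ t : ℝ, deriv (deriv (fun s => -f s)) t = -deriv (deriv f) t := by
      intro t; rw [hF1]; exact deriv.neg
    have key := quasi_main a b (fun s => -f s) (fun s => g (-s)) hf.neg
      (by intro t ht; rw [hd1]; linarith [hsign t ht])
      (by intro t ht; rw [hd2]; exact neg_ne_zero.2 (hf'' t ht))
      (by
        have : (fun t => deriv (fun s => -f s) t / deriv (deriv (fun s => -f s)) t)
            = fun t => deriv f t / deriv (deriv f) t := by
          funext t; rw [hd1, hd2, neg_div_neg_eq]
        rw [this]; exact hconv)
      (by intro t ht; rw [hd1, hd2, neg_div_neg_eq]; exact hneg t ht)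
      (by
        constructor
        · intro t ht
          simp only [neg_neg]
          exact hg.1 ht
        · rintro s ⟨t, ht, rfl⟩
          simp only [neg_neg]
          exact congrArg Neg.neg (hg.2 (mem_image_of_mem f ht)))
    intro x hx y hy u hu v hv
    have := key x hx y hy u hu v hv
    have e : ∀ s s' : ℝ, -((-s + -s') / 2) = (s + s') / 2 := fun s s' => by ring
    rw [show -f x + -f y = -(f x + f y) by ring, show -f u + -f v = -(f u + f v) by ring,
      show -f ((x+u)/2) + -f ((y+v)/2) = -(f ((x+u)/2) + f ((y+v)/2)) by ring] at this
    simp only [show ∀ s : ℝ, -(-s / 2) = s / 2 from fun s => by ring] at this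
    exact this
  · have hsign : ∀ t ∈ Ioo a b, 0 < deriv f t := by
      intro t ht
      rcases (hf' t ht).lt_or_gt with h | h
      · exfalso
        have h0m : (0:ℝ) ∈ uIcc (deriv f t) (deriv f ((a+b)/2)) := by
          rw [mem_uIcc]; left; exact ⟨h.le, hpos0.le⟩
        obtain ⟨ζ, hζm, hζ0⟩ := intermediate_value_uIcc
          (hf'cont.mono (husub t ht)) h0m
        exact hf' ζ (husub t ht hζm) hζ0
      · exact h
    exact quasi_main a b f g hf hsign hf'' hconv hneg hg
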